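/- Let v₁ = (0,0,0), v₂ = (1000,0,0), v₃ = (262,674,0), v₄ = (433,−130,569), v₅ = (−197,506,123), v₆ = (316,−334,−54), v₇ = (374,225,773), v₈ = (41,−525,203), v₉ = (670,152,−179), v₁₀ = (405,640,653) in ℝ³, and define edge vectors eᵢ = v_{i+1} − vᵢ for i = 1, …, 9 and e₁₀ = v₁ − v₁₀. Then there is no w ∈ ℝ³ such that (−1)^{i+1} (w · eᵢ) > 0 for every i ∈ {1, …, 10}. -/

import Mathlib

/-- The vertices of the paper's 10-stick polygonal realization of the knot `8_10`.
Here `vert8_10 i` is the paper's vertex `v_(i+1)`. -/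
noncomputable def vert8_10 : Fin 10 → (Fin 3 → ℝ) :=
  ![![0, 0, 0], ![1000, 0, 0], ![262, 674, 0], ![433, -130, 569], ![-197, 506, 123], ![316, -334, -54], ![374, 225, 773], ![41, -525, 203], ![670, 152, -179], ![405, 640, 653]]

/-- The edge vectors `eᵢ = v_(i+1) − vᵢ` (cyclically, so `e₁₀ = v₁ − v₁₀`);
here `edge8_10 i` is the paper's `e_(i+1)`, using wrap-around addition on `Fin 10`. -/
noncomputable def edge8_10 (i : Fin 10) : Fin 3 → ℝ :=
  vert8_10 (i + 1) - vert8_10 i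

/-- There is no `w ∈ ℝ³` such that `(−1)^(i+1) (w · eᵢ) > 0` for every
`i ∈ {1, …, 10}`: no projection of this polygon (the knot `8_10`) to a line has
5 local maxima. (With 0-based indexing `i : Fin 10`, the sign is `(−1)^i`.) -/
theorem no_alternating_direction_8_10 :
    ¬ ∃ w : Fin 3 → ℝ, ∀ i : Fin 10,
        0 < (-1 : ℝ) ^ (i : ℕ) * ∑ j : Fin 3, w j * edge8_10 i j := by
  rintro ⟨w, h⟩
  have h0 := h 0
  have h5 := h 5
  have h8 := h 8
  have h9 := h 9
  simp only [edge8_10, Fin.sum_univ_three, Fin.isValue, Pi.sub_apply,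
    show vert8_10 0 = ![0,0,0] from rfl,
    show vert8_10 1 = ![1000,0,0] from rfl,
    show vert8_10 5 = ![316,-334,-54] from rfl,
    show vert8_10 6 = ![374,225,773] from rfl,
    show vert8_10 8 = ![670,152,-179] from rfl,
    show vert8_10 9 = ![405,640,653] from rfl,
    show ((0:Fin 10)+1 : Fin 10) = 1 from rfl,
    show ((5:Fin 10)+1 : Fin 10) = 6 from rfl,
    show ((8:Fin 10)+1 : Fin 10) = 9 from rfl,
    show ((9:Fin 10)+1 : Fin 10) = 0 from rfl,
    show ((0:Fin 10):ℕ) = 0 from rfl,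
    show ((5:Fin 10):ℕ) = 5 from rfl,
    show ((8:Fin 10):ℕ) = 8 from rfl,
    show ((9:Fin 10):ℕ) = 9 from rfl,
    Matrix.cons_val_zero, Matrix.cons_val_one, Matrix.head_cons,
    Matrix.cons_val_two, Matrix.tail_cons] at h0 h5 h8 h9
  norm_num at h0 h5 h8 h9
  linarith
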